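/- Let f ∈ ℂ[x] be a polynomial with deg f = n ≥ 1. Then f can be written as a linear combination of at most n polynomials of the form (x − tᵢ)ⁿ with distinct tᵢ ∈ ℂ, and if moreover f = (x − p)^(n−1)·(x − q) with q ≠ p, then f cannot be written as a linear combination of fewer than n such powers. -/

import Mathlib

open Polynomial Finset


lemma nat_choose_ratio {n k : ℕ} (hn : 1 ≤ n) : (n - k) * n.choose k = n * (n-1).choose k := by
  obtain ⟨m, rfl⟩ : ∃ m, n = m + 1 := ⟨n - 1, by omega⟩
  simp only [Nat.add_sub_cancel]
  rw [Nat.add_one_mul_choose_eq]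
  show (m + 1 - k) * (m + 1).choose k = (m+1).choose (k+1) * (k+1)
  rw [Nat.choose_succ_right_eq, mul_comm]

noncomputable def phiW (n : ℕ) (P : ℂ[X]) : ℂ[X] →ₗ[ℂ] ℂ :=
  ∑ k ∈ Finset.range (n+1), ((-1)^(n-k) * P.coeff (n-k) / (n.choose k : ℂ)) • Polynomial.lcoeff ℂ k

lemma phiW_apply (n : ℕ) (P g : ℂ[X]) :
    phiW n P g = ∑ k ∈ Finset.range (n+1),
      (-1)^(n-k) * P.coeff (n-k) / (n.choose k : ℂ) * g.coeff k := by
  simp [phiW, lcoeff_apply]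

lemma coeff_X_sub_C_pow' (t : ℂ) (n k : ℕ) :
    ((X - C t)^n).coeff k = (-t)^(n-k) * (n.choose k : ℂ) := by
  rw [sub_eq_add_neg, ← C_neg, coeff_X_add_C_pow]

lemma choose_ne_zero' {n k : ℕ} (h : k < n + 1) : (n.choose k : ℂ) ≠ 0 := by
  exact_mod_cast Nat.ne_of_gt (Nat.choose_pos (Nat.lt_succ_iff.mp h))

lemma phiW_pow (n : ℕ) (P : ℂ[X]) (hP : P.natDegree ≤ n) (t : ℂ) :
    phiW n P ((X - C t)^n) = P.eval t := by
  rw [phiW_apply]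
  have : ∀ k ∈ Finset.range (n+1),
      (-1)^(n-k) * P.coeff (n-k) / (n.choose k : ℂ) * (((X - C t)^n).coeff k)
        = P.coeff (n-k) * t^(n-k) := by
    intro k hk
    rw [Finset.mem_range] at hk
    have hc := choose_ne_zero' hk
    rw [coeff_X_sub_C_pow', neg_pow t]
    rw [div_mul_eq_mul_div, div_eq_iff hc]
    have h1 : ((-1:ℂ))^(n-k) * (-1:ℂ)^(n-k) = 1 := by
      rw [← pow_add, ← two_mul, pow_mul]; norm_num
    linear_combination (P.coeff (n-k) * t^(n-k) * (n.choose k:ℂ)) * h1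
  rw [Finset.sum_congr rfl this]
  have hrefl := Finset.sum_range_reflect (fun j => P.coeff j * t ^ j) (n+1)
  simp only [Nat.add_sub_cancel] at hrefl
  rw [hrefl, eval_eq_sum_range' (Nat.lt_succ_of_le hP) t]

lemma phiW_pow_pred (n : ℕ) (hn : 1 ≤ n) (P : ℂ[X]) (hP : P.natDegree ≤ n) (t : ℂ) :
    phiW n P ((X - C t)^(n-1)) = -(P.derivative.eval t)/n := by
  have hn0 : (n : ℂ) ≠ 0 := by exact_mod_cast Nat.one_le_iff_ne_zero.mp hn
  rw [phiW_apply]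
  have : ∀ k ∈ Finset.range (n+1),
      (-1)^(n-k) * P.coeff (n-k) / (n.choose k : ℂ) * (((X - C t)^(n-1)).coeff k)
        = -(P.coeff (n-k) * (n-k : ℕ) * t^(n-1-k)) / n := by
    intro k hk
    rw [Finset.mem_range] at hk
    by_cases hkn : k < n
    · have hc := choose_ne_zero' hk
      rw [coeff_X_sub_C_pow', neg_pow t]
      have hratio : ((n - k : ℕ) : ℂ) * (n.choose k : ℂ) = (n : ℂ) * ((n-1).choose k : ℂ) := by
        exact_mod_cast congrArg (Nat.cast : ℕ → ℂ) (nat_choose_ratio hn)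
      have hsign : ((-1:ℂ))^(n-k) * (-1:ℂ)^(n-1-k) = -1 := by
        have : (n - k) + (n - 1 - k) = 2 * (n - 1 - k) + 1 := by omega
        rw [← pow_add, this, pow_succ, pow_mul]
        norm_num
      have key : (((n-1).choose k : ℕ) : ℂ) = ((n-k:ℕ):ℂ) * (n.choose k : ℂ) / (n:ℂ) := by
        rw [eq_div_iff hn0]
        linear_combination -hratio
      calc (-1)^(n-k) * P.coeff (n-k) / (n.choose k : ℂ)
            * ((-1)^(n-1-k) * t^(n-1-k) * (((n-1).choose k : ℕ) : ℂ))
          = ((-1:ℂ))^(n-k) * (-1:ℂ)^(n-1-k)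
            * (P.coeff (n-k) * t^(n-1-k) * (((n-1).choose k : ℕ) : ℂ) / (n.choose k : ℂ)) := by
            ring
        _ = -(P.coeff (n-k) * t^(n-1-k)
              * (((n-k:ℕ):ℂ) * (n.choose k : ℂ) / (n:ℂ)) / (n.choose k : ℂ)) := by
            rw [hsign, key]; ring
        _ = -(P.coeff (n-k) * ((n-k:ℕ):ℂ) * t^(n-1-k)) / (n:ℂ) := by
            field_simp
    · have hz : ((X - C t)^(n-1)).coeff k = 0 := by
        apply coeff_eq_zero_of_natDegree_lt
        calc ((X - C t)^(n-1)).natDegree ≤ n - 1 := by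
              apply le_trans (natDegree_pow_le)
              simp [natDegree_X_sub_C]
          _ < k := by omega
      have hz2 : n - k = 0 := by omega
      rw [hz, hz2]
      simp
  rw [Finset.sum_congr rfl this]
  have hrefl := Finset.sum_range_reflect
    (fun j => -(P.coeff (j+1) * ((j+1 : ℕ) : ℂ) * t^j) / n) n
  have hsum : ∑ k ∈ Finset.range (n+1), -(P.coeff (n-k) * ((n-k : ℕ) : ℂ) * t^(n-1-k)) / (n:ℂ)
      = ∑ k ∈ Finset.range n, -(P.coeff (n-k) * ((n-k : ℕ) : ℂ) * t^(n-1-k)) / n := by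
    rw [Finset.sum_range_succ]
    simp
  rw [hsum]
  have heq : ∀ k ∈ Finset.range n, -(P.coeff (n-k) * ((n-k : ℕ) : ℂ) * t^(n-1-k)) / (n:ℂ)
      = (fun j => -(P.coeff (j+1) * ((j+1 : ℕ) : ℂ) * t^j) / (n:ℂ)) (n-1-k) := by
    intro k hk
    rw [Finset.mem_range] at hk
    have h1 : n - 1 - k + 1 = n - k := by omega
    simp only [h1]
  rw [Finset.sum_congr rfl heq, hrefl]
  have hd : P.derivative.eval t = ∑ j ∈ Finset.range n, P.coeff (j+1) * ((j+1:ℕ):ℂ) * t^j := by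
    have hdlt : P.derivative.natDegree < n := by
      calc P.derivative.natDegree ≤ P.natDegree - 1 := natDegree_derivative_le P
        _ < n := by omega
    rw [eval_eq_sum_range' hdlt t]
    apply Finset.sum_congr rfl
    intro j _
    rw [coeff_derivative]
    push_cast
    ring
  rw [hd]
  simp only [neg_div, Finset.sum_neg_distrib, Finset.sum_div]

lemma phiW_left_pow (n : ℕ) (b : ℂ) (g : ℂ[X]) (hg : g.natDegree ≤ n) :
    phiW n ((X - C b)^n) g = (-1)^n * g.eval b := by
  rw [phiW_apply]
  have : ∀ k ∈ Finset.range (n+1),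
      (-1)^(n-k) * ((X - C b)^n).coeff (n-k) / (n.choose k : ℂ) * g.coeff k
        = (-1)^n * (g.coeff k * b^k) := by
    intro k hk
    rw [Finset.mem_range] at hk
    have hkn : k ≤ n := Nat.lt_succ_iff.mp hk
    have hc := choose_ne_zero' hk
    rw [coeff_X_sub_C_pow', neg_pow b]
    have h1 : n - (n - k) = k := by omega
    rw [h1, Nat.choose_symm hkn]
    have hsign : ((-1:ℂ))^(n-k) * (-1:ℂ)^k = (-1:ℂ)^n := by
      rw [← pow_add]
      congr 1
      omega
    rw [div_mul_eq_mul_div, div_eq_iff hc]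
    linear_combination (g.coeff k * b^k * (n.choose k : ℂ)) * hsign
  rw [Finset.sum_congr rfl this, ← Finset.mul_sum, eval_eq_sum_range' (Nat.lt_succ_of_le hg) b]

lemma phiW_sum (n r : ℕ) (P : ℂ[X]) (hP : P.natDegree ≤ n) (t c : Fin r → ℂ) :
    phiW n P (∑ i, c i • (X - C (t i))^n) = ∑ i, c i * P.eval (t i) := by
  rw [map_sum]
  apply Finset.sum_congr rfl
  intro i _
  rw [map_smul, phiW_pow n P hP, smul_eq_mul]

lemma natDegree_prod_X_sub_C (S : Finset ℂ) :
    (∏ s ∈ S, (X - C s)).natDegree = S.card := by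
  rw [natDegree_prod_of_monic _ _ (fun s _ => monic_X_sub_C s)]
  simp [natDegree_X_sub_C]

lemma deriv_prod_X_sub_C {S : Finset ℂ} {p : ℂ} (hp : p ∈ S) :
    (∏ s ∈ S, (X - C s)).derivative.eval p = ∏ s ∈ S.erase p, (p - s) := by
  rw [← Finset.mul_prod_erase S _ hp, derivative_mul]
  simp [eval_prod]

lemma part_b (n : ℕ) (hn : 1 ≤ n) (f : ℂ[X]) (p q : ℂ) (hqp : q ≠ p)
    (hfpq : f = (X - C p)^(n-1) * (X - C q)) :
    ¬ ∃ r : ℕ, r < n ∧ ∃ (t : Fin r → ℂ) (c : Fin r → ℂ),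
        f = ∑ i, c i • (X - C (t i)) ^ n := by
  rintro ⟨r, hr, t, c, hdec⟩
  have hn0 : (n : ℂ) ≠ 0 := by exact_mod_cast Nat.one_le_iff_ne_zero.mp hn
  set S : Finset ℂ := insert p (Finset.image t Finset.univ) with hS
  set P : ℂ[X] := ∏ s ∈ S, (X - C s) with hPdef
  have hPdeg : P.natDegree ≤ n := by
    rw [hPdef, natDegree_prod_X_sub_C]
    calc S.card ≤ (Finset.image t Finset.univ).card + 1 := Finset.card_insert_le _ _
      _ ≤ r + 1 := by
          have := Finset.card_image_le (s := (Finset.univ : Finset (Fin r))) (f := t)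
          simp only [Finset.card_univ, Fintype.card_fin] at this
          omega
      _ ≤ n := by omega
  have hProots : ∀ s ∈ S, P.eval s = 0 := by
    intro s hs
    rw [hPdef, eval_prod]
    exact Finset.prod_eq_zero hs (by simp)
  have h1 : phiW n P f = 0 := by
    rw [hdec, phiW_sum n r P hPdeg]
    apply Finset.sum_eq_zero
    intro i _
    rw [hProots (t i) (by simp [hS])]
    ring
  have hsplit : f = (X - C p)^n + C (p - q) * (X - C p)^(n-1) := by
    obtain ⟨m, rfl⟩ : ∃ m, n = m + 1 := ⟨n - 1, by omega⟩
    rw [hfpq]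
    simp only [Nat.add_sub_cancel, pow_succ]
    rw [C_sub]
    ring
  have hpS : p ∈ S := Finset.mem_insert_self p _
  have hD : P.derivative.eval p = ∏ s ∈ S.erase p, (p - s) := deriv_prod_X_sub_C hpS
  have hDne : P.derivative.eval p ≠ 0 := by
    rw [hD]
    apply Finset.prod_ne_zero_iff.mpr
    intro s hs
    have : s ≠ p := Finset.ne_of_mem_erase hs
    exact sub_ne_zero.mpr (Ne.symm this)
  have h2 : phiW n P f = (p - q) * (-(P.derivative.eval p)/n) := by
    rw [hsplit, map_add, ← smul_eq_C_mul, map_smul, phiW_pow n P hPdeg,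
      phiW_pow_pred n hn P hPdeg, hProots p hpS, smul_eq_mul]
    ring
  rw [h1] at h2
  have hpq : p - q ≠ 0 := sub_ne_zero.mpr fun h => hqp (h.symm)
  rcases mul_eq_zero.mp h2.symm with h | h
  · exact hpq h
  · exact hDne (neg_eq_zero.mp ((div_eq_zero_iff.mp h).resolve_right hn0))


lemma lin_indep_pows (n : ℕ) (t : Fin n → ℂ) (ht : Function.Injective t) :
    LinearIndependent ℂ (fun i : Fin n => (X - C (t i))^n) := by
  rw [Fintype.linearIndependent_iff]
  intro c hc j
  set R : ℂ[X] := ∏ i ∈ Finset.univ.erase j, (X - C (t i)) with hR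
  have hRdeg : R.natDegree ≤ n := by
    rw [hR, natDegree_prod_of_monic _ _ (fun s _ => monic_X_sub_C _)]
    simp only [natDegree_X_sub_C, Finset.sum_const, smul_eq_mul, mul_one]
    calc (Finset.univ.erase j).card ≤ (Finset.univ : Finset (Fin n)).card :=
          Finset.card_le_card (Finset.erase_subset _ _)
      _ = n := by simp
  have h0 : phiW n R (∑ i, c i • (X - C (t i))^n) = 0 := by rw [hc, map_zero]
  rw [phiW_sum n n R hRdeg] at h0
  have hsingle : ∑ i, c i * R.eval (t i) = c j * R.eval (t j) := by
    apply Finset.sum_eq_single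
    · intro i _ hij
      have : R.eval (t i) = 0 := by
        rw [hR, eval_prod]
        exact Finset.prod_eq_zero (Finset.mem_erase.mpr ⟨hij, Finset.mem_univ i⟩) (by simp)
      rw [this, mul_zero]
    · intro h; exact absurd (Finset.mem_univ j) h
  have hRj : R.eval (t j) ≠ 0 := by
    rw [hR, eval_prod]
    apply Finset.prod_ne_zero_iff.mpr
    intro i hi
    simp only [eval_sub, eval_X, eval_C]
    exact sub_ne_zero.mpr fun h => (Finset.mem_erase.mp hi).1 (ht h.symm)
  rw [hsingle] at h0
  rcases mul_eq_zero.mp h0 with h | h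
  · exact h
  · exact absurd h hRj

lemma exists_eval_ne (f : ℂ[X]) (hf : f ≠ 0) : ∃ b : ℂ, f.eval b ≠ 0 := by
  obtain ⟨b, hb⟩ := Infinite.exists_notMem_finset f.roots.toFinset
  refine ⟨b, fun h => hb ?_⟩
  simp only [Multiset.mem_toFinset, mem_roots hf]
  exact h


-- coefficients of a product of monic-linear-in-Y polynomials, with coefficients
-- linear in s, have s-degree ≤ card - j
lemma coeff_prod_bound {ι : Type*} (A : Finset ι) (l : ι → ℂ[X]) (hl : ∀ i, (l i).natDegree ≤ 1) :
    ∀ j : ℕ, ((∏ i ∈ A, (Polynomial.X - Polynomial.C (l i))).coeff j).natDegree ≤ A.card - j := by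
  classical
  induction A using Finset.cons_induction with
  | empty =>
    intro j
    rcases Nat.eq_zero_or_pos j with h | h
    · subst h; simp
    · have : j ≠ 0 := by omega
      simp [Polynomial.coeff_one, this]
  | cons a A ha ih =>
    intro j
    rw [Finset.prod_cons, sub_mul, Polynomial.coeff_sub]
    set Q := ∏ i ∈ A, (Polynomial.X - Polynomial.C (l i)) with hQ
    have hQdeg : Q.natDegree = A.card := by
      rw [hQ, Polynomial.natDegree_prod_of_monic _ _ (fun s _ => Polynomial.monic_X_sub_C _)]
      simp
    have hQc : ∀ m, (Q.coeff m).natDegree ≤ A.card - m := ih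
    have hCmul : ((Polynomial.C (l a) * Q).coeff j).natDegree ≤ A.card + 1 - j := by
      rw [Polynomial.coeff_C_mul]
      rcases Nat.lt_or_ge A.card j with h | h
      · have : Q.coeff j = 0 := Polynomial.coeff_eq_zero_of_natDegree_lt (hQdeg ▸ h)
        simp [this]
      · calc ((l a) * Q.coeff j).natDegree ≤ (l a).natDegree + (Q.coeff j).natDegree :=
              Polynomial.natDegree_mul_le
          _ ≤ 1 + (A.card - j) := add_le_add (hl a) (hQc j)
          _ ≤ A.card + 1 - j := by omega
    have hXmul : ((Polynomial.X * Q).coeff j).natDegree ≤ A.card + 1 - j := by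
      cases j with
      | zero => simp
      | succ m =>
        rw [Polynomial.coeff_X_mul]
        calc (Q.coeff m).natDegree ≤ A.card - m := hQc m
          _ ≤ A.card + 1 - (m+1) := by omega
    rw [Finset.card_cons]
    exact (Polynomial.natDegree_sub_le _ _).trans (max_le hXmul hCmul)



section
variable (n : ℕ) (b : ℂ) (f : ℂ[X])

noncomputable def lW : Fin n → ℂ[X] := fun i => C (((i:ℕ):ℂ)+1) * X + C b
noncomputable def PPW : Polynomial ℂ[X] := ∏ i : Fin n, (X - C (lW n b i))
noncomputable def GW : ℂ[X] := ∑ k ∈ Finset.range (n+1),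
  ((-1)^(n-k) * f.coeff k / (n.choose k : ℂ)) • (PPW n b).coeff (n-k)

lemma lW_ne (i : Fin n) : (((i:ℕ):ℂ)+1) ≠ 0 := by
  have : (0:ℝ) ≤ ((i:ℕ):ℝ) := Nat.cast_nonneg _
  intro h
  have := congrArg Complex.re h
  simp [Complex.add_re, Complex.natCast_re] at this
  have h2 : (0:ℝ) ≤ ((i:ℕ):ℝ) := Nat.cast_nonneg _
  linarith

lemma PPW_map (s : ℂ) :
    (PPW n b).map (evalRingHom s) = ∏ i : Fin n, (X - C ((((i:ℕ):ℂ)+1) * s + b)) := by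
  rw [PPW, Polynomial.map_prod]
  apply Finset.prod_congr rfl
  intro i _
  rw [Polynomial.map_sub, Polynomial.map_X, Polynomial.map_C]
  congr 1
  simp [lW, mul_comm]

lemma GW_eval (s : ℂ) :
    (GW n b f).eval s = phiW n (∏ i : Fin n, (X - C ((((i:ℕ):ℂ)+1) * s + b))) f := by
  rw [GW, phiW_apply, eval_finset_sum]
  apply Finset.sum_congr rfl
  intro k _
  rw [← PPW_map]
  rw [Polynomial.coeff_map]
  simp only [smul_eq_C_mul, eval_mul, eval_C, coe_evalRingHom]
  ring

lemma GW_coeff_n (hn : 1 ≤ n) : (GW n b f).coeff n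
    = f.coeff n * ((-1)^n * ∏ i : Fin n, (((i:ℕ):ℂ)+1)) := by
  rw [GW, finset_sum_coeff]
  rw [Finset.sum_eq_single n]
  · have h0 : (PPW n b).coeff 0 = C ((-1:ℂ)^n) * ∏ i : Fin n, lW n b i := by
      rw [PPW, coeff_zero_eq_eval_zero, eval_prod]
      have : ∀ i ∈ (Finset.univ : Finset (Fin n)),
          Polynomial.eval (0 : ℂ[X]) (X - C (lW n b i)) = C (-1:ℂ) * lW n b i := by
        intro i _
        simp only [eval_sub, eval_X, eval_C, zero_sub, C_neg, C_1, neg_one_mul]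
      rw [Finset.prod_congr rfl this, Finset.prod_mul_distrib]
      simp [← C_pow]
    have hld : ∀ i : Fin n, (lW n b i).natDegree = 1 := fun i =>
      natDegree_linear (lW_ne n i)
    have hne : ∀ i ∈ (Finset.univ : Finset (Fin n)), lW n b i ≠ 0 := by
      intro i _
      intro h
      have := hld i
      rw [h] at this
      simp at this
    have hprodd : (∏ i : Fin n, lW n b i).natDegree = n := by
      rw [natDegree_prod _ _ hne]
      simp [hld]
    have hlc : (∏ i : Fin n, lW n b i).coeff n = ∏ i : Fin n, (((i:ℕ):ℂ)+1) := by
      have := coeff_natDegree (p := ∏ i : Fin n, lW n b i)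
      rw [hprodd] at this
      rw [this, leadingCoeff_prod]
      apply Finset.prod_congr rfl
      intro i _
      rw [lW, leadingCoeff_linear (lW_ne n i)]
    rw [Nat.sub_self, coeff_smul, h0, coeff_C_mul, hlc]
    simp only [pow_zero, Nat.choose_self, Nat.cast_one, one_mul, div_one, smul_eq_mul]
    try ring
    try rfl
  · intro k hk hkn
    rw [Finset.mem_range] at hk
    have hklt : k < n := by omega
    have hbound := coeff_prod_bound Finset.univ (lW n b) (fun i => by rw [lW]; exact natDegree_linear_le) (n - k)
    simp only [Finset.card_univ, Fintype.card_fin] at hbound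
    have hdeg : ((PPW n b).coeff (n-k)).natDegree < n := by
      rw [PPW]
      calc ((∏ i : Fin n, (X - C (lW n b i))).coeff (n-k)).natDegree ≤ n - (n-k) := hbound
        _ < n := by omega
    rw [coeff_smul, coeff_eq_zero_of_natDegree_lt hdeg]
    simp
  · intro h
    simp at h
end

/-- Every polynomial of degree `n ≥ 1` is a linear combination of `n` powers
`(x - tᵢ)ⁿ` with distinct `tᵢ`; and if `f = (x-p)^(n-1)(x-q)` with `q ≠ p`,
then `f` is not a linear combination of fewer than `n` such powers. -/
theorem waring_polynomials (n : ℕ) (hn : 1 ≤ n) (f : ℂ[X]) (hf : f.natDegree = n) :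
    (∃ t : Fin n → ℂ, Function.Injective t ∧
        ∃ c : Fin n → ℂ, f = ∑ i, c i • (X - C (t i)) ^ n) ∧
      (∀ p q : ℂ, q ≠ p → f = (X - C p) ^ (n - 1) * (X - C q) →
        ¬ ∃ r : ℕ, r < n ∧ ∃ (t : Fin r → ℂ) (c : Fin r → ℂ),
            f = ∑ i, c i • (X - C (t i)) ^ n) := by
  constructor
  · -- part (a)
    have hf0 : f ≠ 0 := by
      intro h
      rw [h, natDegree_zero] at hf
      omega
    obtain ⟨b, hb⟩ := exists_eval_ne f hf0
    have hfn : f.coeff n ≠ 0 := by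
      rw [← hf, coeff_natDegree]
      exact leadingCoeff_ne_zero.mpr hf0
    have hGcoeff : (GW n b f).coeff n ≠ 0 := by
      rw [GW_coeff_n n b f hn]
      apply mul_ne_zero hfn
      apply mul_ne_zero (pow_ne_zero _ (by norm_num))
      exact Finset.prod_ne_zero_iff.mpr (fun i _ => lW_ne n i)
    have hGdeg : 0 < (GW n b f).degree := by
      calc (0 : WithBot ℕ) < (n : ℕ) := by exact_mod_cast Nat.pos_of_ne_zero (by omega)
        _ ≤ (GW n b f).degree := le_degree_of_ne_zero hGcoeff
    obtain ⟨s₀, hs₀⟩ := Complex.exists_root hGdeg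
    have hs₀eval : (GW n b f).eval s₀ = 0 := hs₀
    have hs0ne : s₀ ≠ 0 := by
      intro h
      subst h
      have h0 := GW_eval n b f 0
      rw [hs₀eval] at h0
      have hprod : (∏ i : Fin n, (X - C ((((i:ℕ):ℂ)+1) * 0 + b))) = (X - C b)^n := by
        have : ∀ i ∈ (Finset.univ : Finset (Fin n)),
            (X - C ((((i:ℕ):ℂ)+1) * 0 + b)) = X - C b := by
          intro i _
          norm_num
        rw [Finset.prod_congr rfl this, Finset.prod_const, Finset.card_univ, Fintype.card_fin]
      rw [hprod, phiW_left_pow n b f (le_of_eq hf)] at h0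
      exact hb (by
        rcases mul_eq_zero.mp h0.symm with h | h
        · exact absurd h (pow_ne_zero _ (by norm_num))
        · exact h)
    set t : Fin n → ℂ := fun i => (((i:ℕ):ℂ)+1) * s₀ + b with ht
    have htinj : Function.Injective t := by
      intro i j hij
      rw [ht] at hij
      simp only [add_left_inj] at hij
      have := mul_right_cancel₀ hs0ne hij
      have h2 : ((i:ℕ):ℂ) = ((j:ℕ):ℂ) := add_right_cancel this
      have h3 : (i:ℕ) = (j:ℕ) := Nat.cast_injective h2
      exact Fin.val_injective h3
    set P : ℂ[X] := ∏ i : Fin n, (X - C (t i)) with hP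
    have hPdeg : P.natDegree ≤ n := by
      rw [hP, natDegree_prod_of_monic _ _ (fun s _ => monic_X_sub_C _)]
      simp [natDegree_X_sub_C]
    have hphiPf : phiW n P f = 0 := by
      rw [hP, ht, ← GW_eval n b f s₀]
      exact hs₀eval
    have hProots : ∀ i : Fin n, P.eval (t i) = 0 := by
      intro i
      rw [hP, eval_prod]
      exact Finset.prod_eq_zero (Finset.mem_univ i) (by simp)
    -- linear algebra
    set V := degreeLT ℂ (n+1) with hV
    haveI hVfd : FiniteDimensional ℂ V := (degreeLTEquiv ℂ (n+1)).symm.finiteDimensional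
    have hVrank : Module.finrank ℂ V = n+1 := by
      rw [(degreeLTEquiv ℂ (n+1)).finrank_eq, Module.finrank_fin_fun]
    set g : Fin n → ℂ[X] := fun i => (X - C (t i))^n with hg
    have hdegpow : ∀ u : ℂ, (X - C u)^n ∈ V := by
      intro u
      rw [hV, mem_degreeLT]
      calc ((X - C u)^n).degree ≤ (((X - C u)^n).natDegree : WithBot ℕ) := degree_le_natDegree
        _ = (n : ℕ) := by rw [natDegree_pow, natDegree_X_sub_C, mul_one]
        _ < ((n+1 : ℕ) : WithBot ℕ) := by exact_mod_cast Nat.lt_succ_self n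
    have hfV : f ∈ V := by
      rw [hV, mem_degreeLT]
      calc f.degree ≤ (f.natDegree : WithBot ℕ) := degree_le_natDegree
        _ = (n : ℕ) := by rw [hf]
        _ < ((n+1 : ℕ) : WithBot ℕ) := by exact_mod_cast Nat.lt_succ_self n
    set W := V ⊓ LinearMap.ker (phiW n P) with hW
    haveI hWfd : FiniteDimensional ℂ W := Submodule.finiteDimensional_of_le inf_le_left
    have hfW : f ∈ W := Submodule.mem_inf.mpr ⟨hfV, LinearMap.mem_ker.mpr hphiPf⟩
    have hspan_le : Submodule.span ℂ (Set.range g) ≤ W := by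
      rw [Submodule.span_le]
      rintro x ⟨i, rfl⟩
      refine Submodule.mem_inf.mpr ⟨hdegpow (t i), LinearMap.mem_ker.mpr ?_⟩
      rw [hg, phiW_pow n P hPdeg, hProots i]
    have hWlt : W < V := by
      refine lt_of_le_of_ne inf_le_left ?_
      intro hEq
      have hPne : P ≠ 0 := (monic_prod_of_monic _ _ (fun s _ => monic_X_sub_C _)).ne_zero
      obtain ⟨u, hu⟩ := exists_eval_ne P hPne
      have hmem : (X - C u)^n ∈ W := hEq ▸ hdegpow u
      have := (Submodule.mem_inf.mp hmem).2
      rw [LinearMap.mem_ker, phiW_pow n P hPdeg] at this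
      exact hu this
    have hfrW : Module.finrank ℂ W ≤ n := by
      have := Submodule.finrank_lt_finrank_of_lt hWlt
      omega
    have hfrS : Module.finrank ℂ (Submodule.span ℂ (Set.range g)) = n := by
      rw [finrank_span_eq_card (lin_indep_pows n t htinj)]
      simp
    have hSW : Submodule.span ℂ (Set.range g) = W :=
      Submodule.eq_of_le_of_finrank_le hspan_le (by omega)
    rw [← hSW] at hfW
    obtain ⟨c, hc⟩ := (Submodule.mem_span_range_iff_exists_fun ℂ).mp hfW
    exact ⟨t, htinj, c, hc.symm⟩
  · intro p q hqp hfpq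
    exact part_b n hn f p q hqp hfpq
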